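/- For any real x ∈ [0,1] and integer d ≥ 2, the function f(x) = ((d−1)/d · x^{1/γ_d} + 1/d)^{γ_d} is convex on [0,1], where γ_d = log_d(d²/(2d−1)). -/

import Mathlib

open Real

/-- Binary Minkowski-type inequality: `u ↦ (a * u^p + b)^(1/p)` satisfies the convexity
inequality for `p ≥ 1` on nonnegative arguments. -/
lemma minkowski_aux {p a b x y s t : ℝ} (hp : 1 ≤ p)
    (ha : 0 ≤ a) (hb : 0 ≤ b) (hx : 0 ≤ x) (hy : 0 ≤ y)
    (hs : 0 ≤ s) (ht : 0 ≤ t) (hst : s + t = 1) :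
    (a * (s * x + t * y) ^ p + b) ^ (1 / p) ≤
      s * (a * x ^ p + b) ^ (1 / p) + t * (a * y ^ p + b) ^ (1 / p) := by
  have hp0 : 0 < p := lt_of_lt_of_le one_pos hp
  set A := a ^ (1 / p) with hA
  set B := b ^ (1 / p) with hB
  have hA0 : 0 ≤ A := Real.rpow_nonneg ha _
  have hB0 : 0 ≤ B := Real.rpow_nonneg hb _
  have hAp : A ^ p = a := by
    rw [hA, ← Real.rpow_mul ha, one_div_mul_cancel hp0.ne', Real.rpow_one]
  have hBp : B ^ p = b := by
    rw [hB, ← Real.rpow_mul hb, one_div_mul_cancel hp0.ne', Real.rpow_one]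
  set F : Fin 2 → ℝ := ![s * (A * x), s * B] with hF
  set G : Fin 2 → ℝ := ![t * (A * y), t * B] with hG
  have hFpos : ∀ i ∈ Finset.univ, 0 ≤ F i := by
    intro i _
    fin_cases i <;> simp [hF] <;> positivity
  have hGpos : ∀ i ∈ Finset.univ, 0 ≤ G i := by
    intro i _
    fin_cases i <;> simp [hG] <;> positivity
  have key := Real.Lp_add_le_of_nonneg (f := F) (g := G) Finset.univ hp hFpos hGpos
  rw [Fin.sum_univ_two, Fin.sum_univ_two, Fin.sum_univ_two] at key
  have mulpow : ∀ u v : ℝ, 0 ≤ u → 0 ≤ v → (u * v) ^ p = u ^ p * v ^ p := fun u v hu hv =>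
    Real.mul_rpow hu hv
  have e1 : (F 0 + G 0) ^ p = a * (s * x + t * y) ^ p := by
    have : F 0 + G 0 = A * (s * x + t * y) := by simp [hF, hG]; ring
    rw [this, mulpow _ _ hA0 (by positivity), hAp]
  have e2 : (F 1 + G 1) ^ p = b := by
    have : F 1 + G 1 = B := by
      simp [hF, hG]
      nlinarith [hst]
    rw [this, hBp]
  have e3 : (F 0 ^ p + F 1 ^ p) ^ (1 / p) = s * (a * x ^ p + b) ^ (1 / p) := by
    have h0 : F 0 ^ p = s ^ p * (a * x ^ p) := by
      show (s * (A * x)) ^ p = _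
      rw [mulpow _ _ hs (by positivity), mulpow _ _ hA0 hx, hAp]
    have h1 : F 1 ^ p = s ^ p * b := by
      show (s * B) ^ p = _
      rw [mulpow _ _ hs hB0, hBp]
    rw [h0, h1, ← mul_add, Real.mul_rpow (by positivity) (by positivity),
      ← Real.rpow_mul hs, mul_one_div_cancel hp0.ne', Real.rpow_one]
  have e4 : (G 0 ^ p + G 1 ^ p) ^ (1 / p) = t * (a * y ^ p + b) ^ (1 / p) := by
    have h0 : G 0 ^ p = t ^ p * (a * y ^ p) := by
      show (t * (A * y)) ^ p = _
      rw [mulpow _ _ ht (by positivity), mulpow _ _ hA0 hy, hAp]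
    have h1 : G 1 ^ p = t ^ p * b := by
      show (t * B) ^ p = _
      rw [mulpow _ _ ht hB0, hBp]
    rw [h0, h1, ← mul_add, Real.mul_rpow (by positivity) (by positivity),
      ← Real.rpow_mul ht, mul_one_div_cancel hp0.ne', Real.rpow_one]
  rw [e1, e2, e3, e4] at key
  exact key

/-- For any integer `d ≥ 2`, the function `f(x) = ((d-1)/d · x^{1/γ_d} + 1/d)^{γ_d}` is convex
on `[0,1]`, where `γ_d = log_d (d²/(2d-1))`. -/
theorem powerMean_convexOn (d : ℕ) (hd : 2 ≤ d) :
    ConvexOn ℝ (Set.Icc (0 : ℝ) 1)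
      (fun x : ℝ =>
        (((d : ℝ) - 1) / d * x ^ (Real.log ((d : ℝ) ^ 2 / (2 * d - 1)) / Real.log d)⁻¹ +
            1 / d) ^ (Real.log ((d : ℝ) ^ 2 / (2 * d - 1)) / Real.log d)) := by
  have hd2 : (2 : ℝ) ≤ (d : ℝ) := by exact_mod_cast hd
  set γ := Real.log ((d : ℝ) ^ 2 / (2 * d - 1)) / Real.log d with hγdef
  have hlogd : 0 < Real.log d := Real.log_pos (by linarith)
  have hden : (0 : ℝ) < 2 * d - 1 := by linarith
  have hratio1 : (1 : ℝ) < (d : ℝ) ^ 2 / (2 * d - 1) := by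
    rw [lt_div_iff₀ hden]
    nlinarith
  have hratio2 : (d : ℝ) ^ 2 / (2 * d - 1) ≤ d := by
    rw [div_le_iff₀ hden]
    nlinarith
  have hγ0 : 0 < γ := div_pos (Real.log_pos hratio1) hlogd
  have hγ1 : γ ≤ 1 := by
    rw [hγdef, div_le_one hlogd]
    exact Real.log_le_log (by linarith) hratio2
  have hp : 1 ≤ γ⁻¹ := (one_le_inv₀ hγ0).mpr hγ1
  have ha : (0 : ℝ) ≤ ((d : ℝ) - 1) / d := div_nonneg (by linarith) (by linarith)
  have hb : (0 : ℝ) ≤ 1 / (d : ℝ) := by positivity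
  constructor
  · exact convex_Icc 0 1
  · intro x hx y hy s t hs ht hst
    have h := minkowski_aux hp ha hb hx.1 hy.1 hs ht hst
    rw [show (1:ℝ) / γ⁻¹ = γ by rw [one_div, inv_inv]] at h
    simpa [smul_eq_mul] using h
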